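/- arXiv:2012.06155 — 3 statements merged into one kernel-verified Lean document; each statement's English description precedes it below -/
import Mathlib

section
/- In the model of S²×R with infinitesimal arc-length (ds)² = (dt)² + cos²θ (dφ)² + (dθ)², the distance from the base point P₁ = (1,0,0) to a point P₂ = (d,e,f) with d²+e²+f² ≠ 0 equals √( arccos(d/√(d²+e²+f²))² + (log √(d²+e²+f²))² ). -/
open Real


open Real Set

lemma sqrt2d_tri (a b c d : ℝ) :
    Real.sqrt ((a+b)^2 + (c+d)^2) ≤ Real.sqrt (a^2+c^2) + Real.sqrt (b^2+d^2) := by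
  have h1 : 0 ≤ Real.sqrt (a^2+c^2) := Real.sqrt_nonneg _
  have h2 : 0 ≤ Real.sqrt (b^2+d^2) := Real.sqrt_nonneg _
  have e1 : Real.sqrt (a^2+c^2) ^ 2 = a^2+c^2 := Real.sq_sqrt (by positivity)
  have e2 : Real.sqrt (b^2+d^2) ^ 2 = b^2+d^2 := Real.sq_sqrt (by positivity)
  have key : a*b + c*d ≤ Real.sqrt (a^2+c^2) * Real.sqrt (b^2+d^2) := by
    have h3 : (a*b+c*d)^2 ≤ (a^2+c^2)*(b^2+d^2) := by nlinarith [sq_nonneg (a*d - b*c)]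
    nlinarith [sq_nonneg (Real.sqrt (a^2+c^2) * Real.sqrt (b^2+d^2) - (a*b+c*d)),
      mul_nonneg h1 h2, sq_nonneg (a*b+c*d)]
  calc Real.sqrt ((a+b)^2 + (c+d)^2)
      ≤ Real.sqrt ((Real.sqrt (a^2+c^2) + Real.sqrt (b^2+d^2))^2) := by
        apply Real.sqrt_le_sqrt; nlinarith
    _ = Real.sqrt (a^2+c^2) + Real.sqrt (b^2+d^2) := Real.sqrt_sq (by positivity)

lemma sqrt2d_mono {a b c : ℝ} (ha : 0 ≤ a) (hab : a ≤ b) :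
    Real.sqrt (a^2 + c^2) ≤ Real.sqrt (b^2 + c^2) := by
  apply Real.sqrt_le_sqrt; nlinarith

lemma arcsin_le_self_add_cube {z : ℝ} (h0 : 0 ≤ z) (h1 : z ≤ 1/2) :
    arcsin z ≤ z + z^3 := by
  rcases eq_or_lt_of_le h0 with h|h
  · simp [← h]
  have hcube : z^3 ≤ (1/2:ℝ)^3 := pow_le_pow_left₀ h0 h1 3
  have hz1 : z + z^3 ≤ 1 := by nlinarith
  have hz2 : z^2 ≤ 1/4 := by nlinarith
  have h54 : z + z^3 ≤ (5/4)*z := by nlinarith [mul_le_mul_of_nonneg_left hz2 h0]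
  have hc3 : (z+z^3)^3 ≤ ((5/4)*z)^3 := pow_le_pow_left₀ (by positivity) h54 3
  have hs : z ≤ Real.sin (z + z^3) := by
    have := Real.sin_gt_sub_cube (by positivity : (0:ℝ) < z + z^3)
    nlinarith [pow_pos h 3]
  have hnn : (0:ℝ) ≤ z + z^3 := by positivity
  calc arcsin z ≤ arcsin (Real.sin (z + z^3)) := monotone_arcsin hs
    _ = z + z^3 := arcsin_sin (by nlinarith [Real.pi_gt_three]) (by nlinarith [Real.pi_gt_three])

lemma arccos_one_sub_sq (w : ℝ) (h0 : 0 ≤ w) (h2 : w ≤ 2) :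
    arccos (1 - w^2/2) = 2 * arcsin (w/2) := by
  have hs : Real.sin (arcsin (w/2)) = w/2 := Real.sin_arcsin (by linarith) (by linarith)
  have hr0 : 0 ≤ arcsin (w/2) := Real.arcsin_nonneg.2 (by linarith)
  have hr1 : arcsin (w/2) ≤ π/2 := Real.arcsin_le_pi_div_two _
  have hcos : Real.cos (2 * arcsin (w/2)) = 1 - w^2/2 := by
    have := Real.sin_sq_add_cos_sq (arcsin (w/2))
    rw [Real.cos_two_mul']
    nlinarith
  rw [← hcos, Real.arccos_cos (by linarith) (by linarith)]
open scoped RealInnerProductSpace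
variable {V : Type*} [NormedAddCommGroup V] [InnerProductSpace ℝ V]

lemma arccos_antitone {x y : ℝ} (h : x ≤ y) : arccos y ≤ arccos x := by
  rw [Real.arccos_eq_pi_div_two_sub_arcsin, Real.arccos_eq_pi_div_two_sub_arcsin]
  have := Real.monotone_arcsin h
  linarith

lemma sphere_triangle (a b c : V) (ha : ‖a‖ = 1) (hb : ‖b‖ = 1) (hc : ‖c‖ = 1) :
    arccos ⟪a, c⟫ ≤ arccos ⟪a, b⟫ + arccos ⟪b, c⟫ := by
  set s := ⟪a, b⟫ with hsdef
  set t := ⟪b, c⟫ with htdef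
  have hs1 : |s| ≤ 1 := by
    have := abs_real_inner_le_norm a b; rwa [ha, hb, one_mul] at this
  have ht1 : |t| ≤ 1 := by
    have := abs_real_inner_le_norm b c; rwa [hb, hc, one_mul] at this
  have hs1' := abs_le.1 hs1
  have ht1' := abs_le.1 ht1
  rcases le_or_gt π (arccos s + arccos t) with hπ | hπ
  · exact le_trans (Real.arccos_le_pi _) hπ
  · have hA0 := Real.arccos_nonneg s
    have hB0 := Real.arccos_nonneg t
    -- key geometric inequality
    have hbb : ⟪b, b⟫ = 1 := by rw [real_inner_self_eq_norm_sq, hb]; norm_num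
    set p := a - s • b with hpdef
    set q := c - t • b with hqdef
    have hp : ‖p‖^2 = 1 - s^2 := by
      rw [hpdef, norm_sub_sq_real, real_inner_smul_right, norm_smul, Real.norm_eq_abs, hb,
        ha, mul_one, sq_abs, ← hsdef]; ring
    have hq : ‖q‖^2 = 1 - t^2 := by
      rw [hqdef, norm_sub_sq_real, real_inner_smul_right, real_inner_comm b c, ← htdef,
        norm_smul, Real.norm_eq_abs, hb, hc, mul_one, sq_abs]; ring
    have hpq : ⟪p, q⟫ = ⟪a, c⟫ - s*t := by
      simp only [hpdef, hqdef, inner_sub_left, inner_sub_right, real_inner_smul_left,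
        real_inner_smul_right, hbb, mul_one]
      rw [← hsdef, ← htdef]; ring
    have hnp : ‖p‖ = Real.sqrt (1 - s^2) := by
      rw [← hp, Real.sqrt_sq (norm_nonneg _)]
    have hnq : ‖q‖ = Real.sqrt (1 - t^2) := by
      rw [← hq, Real.sqrt_sq (norm_nonneg _)]
    have hcs : -(‖p‖ * ‖q‖) ≤ ⟪p, q⟫ := by
      have := abs_real_inner_le_norm p q
      cases' abs_le.1 this with h1 h2; linarith
    have hkey : Real.cos (arccos s + arccos t) ≤ ⟪a, c⟫ := by
      rw [Real.cos_add, Real.cos_arccos hs1'.1 hs1'.2, Real.cos_arccos ht1'.1 ht1'.2,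
        Real.sin_arccos, Real.sin_arccos]
      rw [hnp, hnq] at hcs
      rw [hpq] at hcs
      linarith
    calc arccos ⟪a, c⟫ ≤ arccos (Real.cos (arccos s + arccos t)) := arccos_antitone hkey
      _ = arccos s + arccos t := Real.arccos_cos (by linarith) (by linarith)

noncomputable section

abbrev E3 : Type := EuclideanSpace ℝ (Fin 3)

def e₁ : E3 := EuclideanSpace.single 0 1

lemma norm_e₁ : ‖e₁‖ = 1 := by
  simp [e₁, EuclideanSpace.norm_single]

/-- distance-from-basepoint comparison function -/
def Fd (v : E3) : ℝ := Real.sqrt (arccos (v 0 / ‖v‖) ^ 2 + (Real.log ‖v‖) ^ 2)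

lemma inner_e₁ (v : E3) : ⟪e₁, v⟫ = v 0 := by
  simp [e₁, EuclideanSpace.inner_single_left]

lemma norm_unit {v : E3} (hv : v ≠ 0) : ‖(‖v‖⁻¹ • v : E3)‖ = 1 := by
  rw [norm_smul, Real.norm_eq_abs, abs_inv, abs_of_nonneg (norm_nonneg v)]
  field_simp [norm_ne_zero_iff.2 hv]

/-- key comparison: Fd changes at most by the "polar coordinates" bound -/
lemma Fd_sub_le (v w : E3) (hv : v ≠ 0) (hw : w ≠ 0) :
    Fd w - Fd v ≤ Real.sqrt ((arccos ⟪(‖v‖⁻¹ • v : E3), (‖w‖⁻¹ • w : E3)⟫)^2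
      + (Real.log ‖w‖ - Real.log ‖v‖)^2) := by
  set uv : E3 := ‖v‖⁻¹ • v with huv
  set uw : E3 := ‖w‖⁻¹ • w with huw
  have hnv : ‖v‖ ≠ 0 := norm_ne_zero_iff.2 hv
  have hnw : ‖w‖ ≠ 0 := norm_ne_zero_iff.2 hw
  have hv0 : v 0 / ‖v‖ = ⟪e₁, uv⟫ := by
    rw [huv, real_inner_smul_right, inner_e₁]; ring
  have hw0 : w 0 / ‖w‖ = ⟪e₁, uw⟫ := by
    rw [huw, real_inner_smul_right, inner_e₁]; ring
  have tri := sphere_triangle e₁ uv uw norm_e₁ (norm_unit hv) (norm_unit hw)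
  set A := arccos ⟪e₁, uv⟫
  set B := arccos ⟪uv, uw⟫
  have hA0 : 0 ≤ A := Real.arccos_nonneg _
  have hB0 : 0 ≤ B := Real.arccos_nonneg _
  have h1 : Fd w ≤ Real.sqrt ((A + B)^2 + (Real.log ‖w‖)^2) := by
    rw [Fd, hw0]
    exact sqrt2d_mono (Real.arccos_nonneg _) tri
  have h2 : Real.sqrt ((A + B)^2 + (Real.log ‖w‖)^2)
      ≤ Real.sqrt (A^2 + (Real.log ‖v‖)^2) + Real.sqrt (B^2 + (Real.log ‖w‖ - Real.log ‖v‖)^2) := by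
    have := sqrt2d_tri A B (Real.log ‖v‖) (Real.log ‖w‖ - Real.log ‖v‖)
    simpa using this
  have h3 : Fd v = Real.sqrt (A^2 + (Real.log ‖v‖)^2) := by rw [Fd, hv0]
  linarith [h1, h2]
section LB
open Filter MeasureTheory intervalIntegral

variable (γ γ' : ℝ → Fin 3 → ℝ)

-- Euclidean versions
def ΓE : ℝ → E3 := fun τ => (EuclideanSpace.equiv (Fin 3) ℝ).symm (γ τ)

lemma ΓE_apply (τ : ℝ) (i : Fin 3) : ΓE γ τ i = γ τ i := rfl

lemma norm_ΓE (τ : ℝ) : ‖ΓE γ τ‖ = Real.sqrt ((γ τ 0)^2 + (γ τ 1)^2 + (γ τ 2)^2) := by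
  rw [EuclideanSpace.norm_eq]
  congr 1
  rw [Fin.sum_univ_three]
  simp [ΓE_apply, Real.norm_eq_abs, sq_abs]

lemma ΓE_ne (τ : ℝ) (h : γ τ ≠ 0) : ΓE γ τ ≠ 0 := by
  simp only [ΓE, ne_eq, EmbeddingLike.map_eq_zero_iff]
  exact h

variable {γ γ'}

lemma hasDerivAt_ΓE (hd : ∀ τ, HasDerivAt γ (γ' τ) τ) (τ : ℝ) :
    HasDerivAt (ΓE γ) (ΓE γ' τ) τ :=
  ((EuclideanSpace.equiv (Fin 3) ℝ).symm.toContinuousLinearMap.hasFDerivAt).comp_hasDerivAt τ (hd τ)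

lemma continuous_ΓE (hc : Continuous γ) : Continuous (ΓE γ) :=
  (EuclideanSpace.equiv (Fin 3) ℝ).symm.continuous.comp hc

end LB
section LB2
open Filter MeasureTheory intervalIntegral

variable (γ γ' : ℝ → Fin 3 → ℝ)

def Uu : ℝ → E3 := fun τ => (‖ΓE γ τ‖)⁻¹ • ΓE γ τ
def Tl : ℝ → ℝ := fun τ => Real.log ‖ΓE γ τ‖
def Td : ℝ → ℝ := fun τ => (⟪ΓE γ τ, ΓE γ' τ⟫ / ‖ΓE γ τ‖) / ‖ΓE γ τ‖
def Ud : ℝ → E3 :=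
  fun τ => (‖ΓE γ τ‖)⁻¹ • ΓE γ' τ + (-(⟪ΓE γ τ, ΓE γ' τ⟫ / ‖ΓE γ τ‖) / ‖ΓE γ τ‖^2) • ΓE γ τ

variable {γ γ'}

lemma norm_Uu {τ : ℝ} (h : γ τ ≠ 0) : ‖Uu γ τ‖ = 1 := norm_unit (ΓE_ne γ τ h)

lemma hasDerivAt_norm_ΓE (hd : ∀ τ, HasDerivAt γ (γ' τ) τ) {σ : ℝ} (h : γ σ ≠ 0) :
    HasDerivAt (fun τ => ‖ΓE γ τ‖) (⟪ΓE γ σ, ΓE γ' σ⟫ / ‖ΓE γ σ‖) σ := by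
  have hne : ΓE γ σ ≠ 0 := ΓE_ne γ σ h
  have hn : ‖ΓE γ σ‖ ≠ 0 := norm_ne_zero_iff.2 hne
  have hQ : HasDerivAt (fun τ => ⟪ΓE γ τ, ΓE γ τ⟫)
      (⟪ΓE γ σ, ΓE γ' σ⟫ + ⟪ΓE γ' σ, ΓE γ σ⟫) σ :=
    HasDerivAt.inner (𝕜 := ℝ) (hasDerivAt_ΓE hd σ) (hasDerivAt_ΓE hd σ)
  have hQ0 : ⟪ΓE γ σ, ΓE γ σ⟫ ≠ 0 := by
    rw [real_inner_self_eq_norm_sq]; positivity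
  have := hQ.sqrt hQ0
  have heq : (fun τ => Real.sqrt ⟪ΓE γ τ, ΓE γ τ⟫) = fun τ => ‖ΓE γ τ‖ := by
    funext τ; rw [real_inner_self_eq_norm_sq, Real.sqrt_sq (norm_nonneg _)]
  rw [heq] at this
  convert this using 1
  rw [real_inner_self_eq_norm_sq, Real.sqrt_sq (norm_nonneg _), real_inner_comm (ΓE γ' σ)]
  field_simp; ring

lemma hasDerivAt_Tl (hd : ∀ τ, HasDerivAt γ (γ' τ) τ) {σ : ℝ} (h : γ σ ≠ 0) :
    HasDerivAt (Tl γ) (Td γ γ' σ) σ := by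
  have hn : ‖ΓE γ σ‖ ≠ 0 := norm_ne_zero_iff.2 (ΓE_ne γ σ h)
  exact (hasDerivAt_norm_ΓE hd h).log hn

lemma hasDerivAt_Uu (hd : ∀ τ, HasDerivAt γ (γ' τ) τ) {σ : ℝ} (h : γ σ ≠ 0) :
    HasDerivAt (Uu γ) (Ud γ γ' σ) σ := by
  have hn : ‖ΓE γ σ‖ ≠ 0 := norm_ne_zero_iff.2 (ΓE_ne γ σ h)
  have hinv : HasDerivAt (fun τ => (‖ΓE γ τ‖)⁻¹)
      (-(⟪ΓE γ σ, ΓE γ' σ⟫ / ‖ΓE γ σ‖) / ‖ΓE γ σ‖^2) σ :=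
    (hasDerivAt_norm_ΓE hd h).inv hn
  exact hinv.smul (hasDerivAt_ΓE hd σ)

lemma Ud_Td_sq {σ : ℝ} (h : γ σ ≠ 0) :
    ‖Ud γ γ' σ‖^2 + (Td γ γ' σ)^2 = (‖ΓE γ' σ‖ / ‖ΓE γ σ‖)^2 := by
  have hn : ‖ΓE γ σ‖ ≠ 0 := norm_ne_zero_iff.2 (ΓE_ne γ σ h)
  set n := ‖ΓE γ σ‖
  set m := ‖ΓE γ' σ‖
  set P : ℝ := ⟪ΓE γ σ, ΓE γ' σ⟫ with hP
  have hcomm : ⟪ΓE γ' σ, ΓE γ σ⟫ = P := real_inner_comm _ _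
  have hexp : ‖Ud γ γ' σ‖^2
      = (n⁻¹)^2 * m^2 + 2 * ((n⁻¹) * (-(P/n)/n^2)) * P + (-(P/n)/n^2)^2 * n^2 := by
    rw [Ud, norm_add_sq_real, real_inner_smul_left, real_inner_smul_right, hcomm,
      norm_smul, norm_smul, Real.norm_eq_abs, Real.norm_eq_abs]
    rw [mul_pow, mul_pow, sq_abs, sq_abs, ← hP]
    ring
  rw [hexp, Td]
  rw [← hP]
  rw [show ‖ΓE γ σ‖ = n from rfl]
  field_simp
  ring
end LB2
section LB3
open Filter MeasureTheory intervalIntegral Set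

lemma sqrt_cross {X Y : ℝ} (hX : 0 ≤ X) (hY : 0 ≤ Y) : Real.sqrt (X^2 + Y^2) ≤ X + Y := by
  calc Real.sqrt (X^2+Y^2) ≤ Real.sqrt ((X+Y)^2) := by
        apply Real.sqrt_le_sqrt; nlinarith
    _ = X + Y := Real.sqrt_sq (by positivity)

lemma est {a b r ε : ℝ} (ha : 0 ≤ a) (hb : 0 ≤ b) (hε0 : 0 < ε) (hε1 : ε ≤ 1)
    (hεr : ε * (a+3) ≤ (r - Real.sqrt (a^2+b^2))/2) (hlt : Real.sqrt (a^2+b^2) < r) :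
    Real.sqrt (((1+ε)*(a+ε))^2 + (b+ε)^2) < r := by
  have hs0 : 0 ≤ Real.sqrt (a^2+b^2) := Real.sqrt_nonneg _
  have h1 : Real.sqrt (((1+ε)*(a+ε))^2 + (b+ε)^2)
      ≤ Real.sqrt ((a + ε*(a+2))^2 + (b+ε)^2) := by
    apply Real.sqrt_le_sqrt
    have hlin : (1+ε)*(a+ε) ≤ a + ε*(a+2) := by nlinarith
    have h0 : (0:ℝ) ≤ (1+ε)*(a+ε) := by positivity
    nlinarith
  have h2 := sqrt2d_tri a (ε*(a+2)) b ε
  have h3 : Real.sqrt ((ε*(a+2))^2 + ε^2) ≤ ε*(a+2) + ε := sqrt_cross (by positivity) hε0.le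
  nlinarith [Real.sqrt_nonneg (((1+ε)*(a+ε))^2 + (b+ε)^2)]

variable {γ γ' : ℝ → Fin 3 → ℝ}

lemma continuousAt_Ud_norm (hd : ∀ τ, HasDerivAt γ (γ' τ) τ) (hc : Continuous γ')
    {x : ℝ} (h : γ x ≠ 0) :
    ContinuousAt (fun σ => ‖Ud γ γ' σ‖) x ∧ ContinuousAt (fun σ => |Td γ γ' σ|) x := by
  have hΓ : Continuous (ΓE γ) := continuous_ΓE (by
    have : Differentiable ℝ γ := fun τ => (hd τ).differentiableAt
    exact this.continuous)
  have hΓ' : Continuous (ΓE γ') := continuous_ΓE hc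
  have hn : ContinuousAt (fun σ => ‖ΓE γ σ‖) x := (hΓ.norm.continuousAt)
  have hne : ‖ΓE γ x‖ ≠ 0 := norm_ne_zero_iff.2 (ΓE_ne γ x h)
  have hinner : ContinuousAt (fun σ => (⟪ΓE γ σ, ΓE γ' σ⟫ : ℝ)) x :=
    (hΓ.inner hΓ').continuousAt
  have hTd : ContinuousAt (Td γ γ') x := by
    apply ContinuousAt.div _ hn hne
    exact hinner.div hn hne
  have hUd : ContinuousAt (Ud γ γ') x := by
    apply ContinuousAt.add
    · exact (hn.inv₀ hne).smul hΓ'.continuousAt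
    · apply ContinuousAt.fun_smul _ hΓ.continuousAt
      apply ContinuousAt.div _ (hn.pow 2) (pow_ne_zero 2 hne)
      exact (hinner.div hn hne).neg
  exact ⟨hUd.norm, hTd.abs⟩
end LB3
section LB4
open Filter MeasureTheory intervalIntegral Set Topology

variable {γ γ' : ℝ → Fin 3 → ℝ}

set_option maxHeartbeats 1000000 in
lemma slope_event (hd : ∀ τ, HasDerivAt γ (γ' τ) τ) (hc : Continuous γ')
    (hne : ∀ τ ∈ Icc (0:ℝ) 1, γ τ ≠ 0) {x : ℝ} (hx : x ∈ Ico (0:ℝ) 1) {r : ℝ}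
    (hr : ‖ΓE γ' x‖ / ‖ΓE γ x‖ < r) :
    ∀ᶠ z in 𝓝[>] x, slope (fun τ => Fd (ΓE γ τ)) x z < r := by
  have hγx : γ x ≠ 0 := hne x ⟨hx.1, hx.2.le⟩
  set a := ‖Ud γ γ' x‖ with hadef
  set b := |Td γ γ' x| with hbdef
  have ha0 : 0 ≤ a := norm_nonneg _
  have hb0 : 0 ≤ b := abs_nonneg _
  have hab : Real.sqrt (a^2 + b^2) = ‖ΓE γ' x‖ / ‖ΓE γ x‖ := by
    rw [hadef, hbdef, sq_abs, Ud_Td_sq hγx]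
    exact Real.sqrt_sq (by positivity)
  have hsr : Real.sqrt (a^2+b^2) < r := by rw [hab]; exact hr
  set ε := min 1 ((r - Real.sqrt (a^2+b^2))/(2*(a+3))) with hεdef
  have hε0 : 0 < ε := lt_min one_pos (div_pos (by linarith) (by positivity))
  have hε1 : ε ≤ 1 := min_le_left _ _
  have hεr : ε*(a+3) ≤ (r - Real.sqrt (a^2+b^2))/2 := by
    have h := min_le_right 1 ((r - Real.sqrt (a^2+b^2))/(2*(a+3)))
    rw [← hεdef] at h
    calc ε*(a+3) ≤ ((r - Real.sqrt (a^2+b^2))/(2*(a+3)))*(a+3) := by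
          apply mul_le_mul_of_nonneg_right _ (by linarith); exact min_le_right _ _
      _ = (r - Real.sqrt (a^2+b^2))/2 := by field_simp
  obtain ⟨hUc, hTc⟩ := continuousAt_Ud_norm hd hc hγx
  have hev : ∀ᶠ σ in 𝓝 x, ‖Ud γ γ' σ‖ < a + ε ∧ |Td γ γ' σ| < b + ε := by
    refine (hUc.eventually_lt_const ?_).and (hTc.eventually_lt_const ?_) <;> linarith
  rw [Metric.eventually_nhds_iff] at hev
  obtain ⟨δ₀, hδ₀, hball⟩ := hev
  set δ := min (δ₀/2) (min (1 - x) (ε/(a+ε+1))) with hδdef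
  have hδ0 : 0 < δ := by
    apply lt_min (by linarith)
    apply lt_min (by linarith [hx.2])
    positivity
  filter_upwards [Ioc_mem_nhdsGT_of_mem ⟨le_refl x, lt_add_of_pos_right x hδ0⟩] with z hz
  obtain ⟨hz1, hz2⟩ := hz
  have hzx : 0 < z - x := by linarith
  -- properties on [x, z]
  have hsub : ∀ σ ∈ Icc x z, γ σ ≠ 0 ∧ ‖Ud γ γ' σ‖ ≤ a + ε ∧ |Td γ γ' σ| ≤ b + ε := by
    intro σ hσ
    have h01 : σ ∈ Icc (0:ℝ) 1 := by
      constructor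
      · linarith [hσ.1, hx.1]
      · have : z ≤ x + δ := hz2
        have : δ ≤ 1 - x := le_trans (min_le_right _ _) (min_le_left _ _)
        linarith [hσ.2]
    have hdist : dist σ x < δ₀ := by
      rw [Real.dist_eq, abs_lt]
      have hδδ : δ ≤ δ₀/2 := min_le_left _ _
      constructor <;> [linarith [hσ.1]; linarith [hσ.2, hz2]]
    obtain ⟨h1, h2⟩ := hball hdist
    exact ⟨hne σ h01, h1.le, h2.le⟩
  -- MVT for u
  have hmvtU : ‖Uu γ z - Uu γ x‖ ≤ (a+ε) * ‖z - x‖ := by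
    apply Convex.norm_image_sub_le_of_norm_hasDerivWithin_le
      (f' := Ud γ γ') (fun σ hσ => (hasDerivAt_Uu hd (hsub σ hσ).1).hasDerivWithinAt)
      (fun σ hσ => (hsub σ hσ).2.1) (convex_Icc x z) ⟨le_refl x, hz1.le⟩ ⟨hz1.le, le_refl z⟩
  have hmvtT : ‖Tl γ z - Tl γ x‖ ≤ (b+ε) * ‖z - x‖ := by
    apply Convex.norm_image_sub_le_of_norm_hasDerivWithin_le
      (f' := Td γ γ') (fun σ hσ => (hasDerivAt_Tl hd (hsub σ hσ).1).hasDerivWithinAt)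
      (fun σ hσ => by rw [Real.norm_eq_abs]; exact (hsub σ hσ).2.2)
      (convex_Icc x z) ⟨le_refl x, hz1.le⟩ ⟨hz1.le, le_refl z⟩
  rw [Real.norm_eq_abs (z-x), abs_of_pos hzx] at hmvtU hmvtT
  set w := ‖Uu γ z - Uu γ x‖ with hwdef
  have hw0 : 0 ≤ w := norm_nonneg _
  have hw : w ≤ (a+ε)*(z-x) := hmvtU
  have hwε : w ≤ ε := by
    have h1 : (a+ε)*(z-x) ≤ (a+ε)*δ := by
      apply mul_le_mul_of_nonneg_left (by linarith) (by linarith)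
    have h2 : δ ≤ ε/(a+ε+1) := le_trans (min_le_right _ _) (min_le_right _ _)
    have h3 : (a+ε)*δ ≤ (a+ε)*(ε/(a+ε+1)) :=
      mul_le_mul_of_nonneg_left h2 (by linarith)
    have h4 : (a+ε)*(ε/(a+ε+1)) ≤ ε := by
      have hle1 : (a+ε)/(a+ε+1) ≤ 1 := by
        rw [div_le_one (by positivity)]; linarith
      calc (a+ε)*(ε/(a+ε+1)) = ε*((a+ε)/(a+ε+1)) := by ring
        _ ≤ ε*1 := mul_le_mul_of_nonneg_left hle1 hε0.le
        _ = ε := mul_one ε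
    linarith
  have hw1 : w ≤ 1 := le_trans hwε hε1
  have hΓz : γ z ≠ 0 := (hsub z ⟨hz1.le, le_refl z⟩).1
  have huz : ‖Uu γ z‖ = 1 := norm_Uu hΓz
  have hux : ‖Uu γ x‖ = 1 := norm_Uu hγx
  have hinner : ⟪Uu γ x, Uu γ z⟫ = 1 - w^2/2 := by
    have hns := norm_sub_sq_real (Uu γ z) (Uu γ x)
    rw [huz, hux, ← hwdef] at hns
    rw [real_inner_comm]
    linarith
  have hw2 : w ≤ 2 := by
    calc w ≤ ‖Uu γ z‖ + ‖Uu γ x‖ := norm_sub_le _ _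
      _ = 2 := by rw [huz, hux]; norm_num
  have hβ : arccos ⟪Uu γ x, Uu γ z⟫ = 2 * arcsin (w/2) := by
    rw [hinner]; exact arccos_one_sub_sq w hw0 hw2
  have harc : 2 * arcsin (w/2) ≤ (1+ε)*w := by
    have hp := arcsin_le_self_add_cube (z := w/2) (by linarith) (by linarith)
    have hww : w*w ≤ ε*ε := mul_le_mul hwε hwε hw0 hε0.le
    nlinarith
  have hFd' : Fd (ΓE γ z) - Fd (ΓE γ x)
      ≤ Real.sqrt ((arccos ⟪Uu γ x, Uu γ z⟫)^2 + (Tl γ z - Tl γ x)^2) := by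
    have h := Fd_sub_le (ΓE γ x) (ΓE γ z) (ΓE_ne γ x hγx) (ΓE_ne γ z hΓz)
    simp only [Uu, Tl]
    exact h
  have hΔ : |Tl γ z - Tl γ x| ≤ (b+ε)*(z-x) := by
    rw [← Real.norm_eq_abs]; exact hmvtT
  have hsqK : Real.sqrt (((1+ε)*(a+ε))^2 + (b+ε)^2) < r := est ha0 hb0 hε0 hε1 hεr hsr
  have hβ2 : arccos ⟪Uu γ x, Uu γ z⟫ ≤ (1+ε)*(a+ε)*(z-x) := by
    rw [hβ]
    calc 2*arcsin (w/2) ≤ (1+ε)*w := harc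
      _ ≤ (1+ε)*((a+ε)*(z-x)) := mul_le_mul_of_nonneg_left hw (by linarith)
      _ = (1+ε)*(a+ε)*(z-x) := by ring
  have hβ0 : 0 ≤ arccos ⟪Uu γ x, Uu γ z⟫ := Real.arccos_nonneg _
  set β := arccos ⟪Uu γ x, Uu γ z⟫ with hβd
  set Δ := Tl γ z - Tl γ x with hΔd
  have hmain : Fd (ΓE γ z) - Fd (ΓE γ x)
      ≤ (z-x) * Real.sqrt (((1+ε)*(a+ε))^2 + (b+ε)^2) := by
    calc Fd (ΓE γ z) - Fd (ΓE γ x)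
        ≤ Real.sqrt (β^2 + Δ^2) := hFd'
      _ ≤ Real.sqrt (((1+ε)*(a+ε)*(z-x))^2 + ((b+ε)*(z-x))^2) := by
          apply Real.sqrt_le_sqrt
          have h1 : β^2 ≤ ((1+ε)*(a+ε)*(z-x))^2 := by nlinarith
          have h2 : Δ^2 ≤ ((b+ε)*(z-x))^2 := by
            have := sq_abs Δ
            nlinarith [abs_nonneg Δ]
          linarith
      _ = (z-x) * Real.sqrt (((1+ε)*(a+ε))^2 + (b+ε)^2) := by
          rw [show ((1+ε)*(a+ε)*(z-x))^2 + ((b+ε)*(z-x))^2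
              = (z-x)^2 * (((1+ε)*(a+ε))^2 + (b+ε)^2) from by ring]
          rw [Real.sqrt_mul (sq_nonneg _), Real.sqrt_sq hzx.le]
  rw [slope_def_field, div_lt_iff₀ hzx]
  have := mul_lt_mul_of_pos_left hsqK hzx
  linarith
end LB4
section LB5
open Filter MeasureTheory intervalIntegral Set Topology

variable {γ γ' : ℝ → Fin 3 → ℝ}

lemma lower_bound (hd : ∀ τ, HasDerivAt γ (γ' τ) τ) (hc : Continuous γ')
    (hne : ∀ τ ∈ Icc (0:ℝ) 1, γ τ ≠ 0) :
    Fd (ΓE γ 1) ≤ Fd (ΓE γ 0) + ∫ τ in (0:ℝ)..1, ‖ΓE γ' τ‖ / ‖ΓE γ τ‖ := by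
  have hΓc : Continuous (ΓE γ) := continuous_ΓE (Differentiable.continuous (fun τ => (hd τ).differentiableAt))
  have hΓ'c : Continuous (ΓE γ') := continuous_ΓE hc
  set ψ : ℝ → ℝ := fun τ => ‖ΓE γ' τ‖ / ‖ΓE γ τ‖ with hψdef
  set g : ℝ → ℝ := fun τ => Fd (ΓE γ τ) with hgdef
  have hnorm_ne : ∀ x ∈ Icc (0:ℝ) 1, ‖ΓE γ x‖ ≠ 0 := fun x hx =>
    norm_ne_zero_iff.2 (ΓE_ne γ x (hne x hx))
  have hψca : ∀ x ∈ Icc (0:ℝ) 1, ContinuousAt ψ x := fun x hx =>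
    (hΓ'c.norm.continuousAt).div (hΓc.norm.continuousAt) (hnorm_ne x hx)
  have hψcOn : ContinuousOn ψ (Icc 0 1) := fun x hx => (hψca x hx).continuousWithinAt
  have hψm : MeasureTheory.StronglyMeasurable ψ :=
    ((hΓ'c.norm.measurable).div (hΓc.norm.measurable)).stronglyMeasurable
  have hgc : ContinuousOn g (Icc 0 1) := by
    intro x hx
    apply ContinuousAt.continuousWithinAt
    apply (Real.continuous_sqrt.continuousAt).comp
    apply ContinuousAt.add
    · apply ContinuousAt.pow
      apply (Real.continuous_arccos.continuousAt).comp
      exact (show Continuous (fun y => ΓE γ y 0) from (continuous_apply (0 : Fin 3)).comp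
          (Differentiable.continuous (fun τ => (hd τ).differentiableAt))).continuousAt.div
        hΓc.norm.continuousAt (hnorm_ne x hx)
    · apply ContinuousAt.pow
      exact ContinuousAt.log hΓc.norm.continuousAt (hnorm_ne x hx)
  have key : ∀ ⦃x⦄, x ∈ Icc (0:ℝ) 1 →
      g x ≤ g 0 + ∫ τ in (0:ℝ)..x, ψ τ := by
    apply image_le_of_liminf_slope_right_le_deriv_boundary (B' := ψ) hgc
    · simp
    · apply continuousOn_const.add
      have := continuousOn_primitive_interval
        (f := ψ) (a := (0:ℝ)) (b := (1:ℝ)) (μ := MeasureTheory.volume) ?_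
      · rwa [uIcc_of_le (zero_le_one)] at this
      · rw [uIcc_of_le (zero_le_one)]; exact hψcOn.integrableOn_Icc
    · intro x hx
      apply HasDerivWithinAt.const_add
      apply intervalIntegral.integral_hasDerivWithinAt_right (t := Ioi x)
      · apply ContinuousOn.intervalIntegrable
        apply hψcOn.mono
        rw [uIcc_of_le hx.1]
        exact Icc_subset_Icc le_rfl hx.2.le
      · exact hψm.stronglyMeasurableAtFilter
      · exact (hψca x (Ico_subset_Icc_self hx)).continuousWithinAt
    · intro x hx r hr
      exact (slope_event hd hc hne hx hr).frequently
  exact key (right_mem_Icc.2 zero_le_one)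
end LB5
section UB
open Set Real

variable (T α c₂ c₃ : ℝ)

def geo : ℝ → Fin 3 → ℝ := fun τ =>
  ![Real.exp (T*τ) * Real.cos (α*τ),
    Real.exp (T*τ) * (Real.sin (α*τ) * c₂),
    Real.exp (T*τ) * (Real.sin (α*τ) * c₃)]

def geo' : ℝ → Fin 3 → ℝ := fun τ =>
  ![Real.exp (T*τ) * (T * Real.cos (α*τ) - α * Real.sin (α*τ)),
    Real.exp (T*τ) * ((T * Real.sin (α*τ) + α * Real.cos (α*τ)) * c₂),
    Real.exp (T*τ) * ((T * Real.sin (α*τ) + α * Real.cos (α*τ)) * c₃)]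

lemma hasDerivAt_exp_mul (τ : ℝ) :
    HasDerivAt (fun τ => Real.exp (T*τ)) (T * Real.exp (T*τ)) τ := by
  have h1 : HasDerivAt (fun τ : ℝ => T*τ) T τ := by
    simpa using (hasDerivAt_id τ).const_mul T
  simpa [mul_comm] using h1.exp

lemma hasDerivAt_cos_mul (τ : ℝ) :
    HasDerivAt (fun τ => Real.cos (α*τ)) (-(α * Real.sin (α*τ))) τ := by
  have h1 : HasDerivAt (fun τ : ℝ => α*τ) α τ := by
    simpa using (hasDerivAt_id τ).const_mul α
  have := h1.cos
  convert this using 1; ring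

lemma hasDerivAt_sin_mul (τ : ℝ) :
    HasDerivAt (fun τ => Real.sin (α*τ)) (α * Real.cos (α*τ)) τ := by
  have h1 : HasDerivAt (fun τ : ℝ => α*τ) α τ := by
    simpa using (hasDerivAt_id τ).const_mul α
  have := h1.sin
  convert this using 1; ring

lemma hasDerivAt_geo (τ : ℝ) : HasDerivAt (geo T α c₂ c₃) (geo' T α c₂ c₃ τ) τ := by
  rw [hasDerivAt_pi]
  intro i
  fin_cases i
  · have := (hasDerivAt_exp_mul T τ).fun_mul (hasDerivAt_cos_mul α τ)
    simp only [geo, geo']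
    refine this.congr_deriv ?_
    simp [Matrix.cons_val_zero, Matrix.cons_val_one, Matrix.head_cons,
      Matrix.cons_val_two, Matrix.tail_cons]
    ring
  · have := (hasDerivAt_exp_mul T τ).fun_mul ((hasDerivAt_sin_mul α τ).mul_const c₂)
    simp only [geo, geo']
    refine this.congr_deriv ?_
    simp [Matrix.cons_val_zero, Matrix.cons_val_one, Matrix.head_cons,
      Matrix.cons_val_two, Matrix.tail_cons]
    ring
  · have := (hasDerivAt_exp_mul T τ).fun_mul ((hasDerivAt_sin_mul α τ).mul_const c₃)
    simp only [geo, geo']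
    refine this.congr_deriv ?_
    simp [Matrix.cons_val_zero, Matrix.cons_val_one, Matrix.head_cons,
      Matrix.cons_val_two, Matrix.tail_cons]
    ring

lemma continuous_geo' : Continuous (geo' T α c₂ c₃) := by
  apply continuous_pi
  intro i
  fin_cases i
  · show Continuous fun a => Real.exp (T*a) * (T * Real.cos (α*a) - α * Real.sin (α*a))
    fun_prop
  · show Continuous fun a => Real.exp (T*a) * ((T * Real.sin (α*a) + α * Real.cos (α*a)) * c₂)
    fun_prop
  · show Continuous fun a => Real.exp (T*a) * ((T * Real.sin (α*a) + α * Real.cos (α*a)) * c₃)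
    fun_prop

lemma geo_sq (hc : c₂^2 + c₃^2 = 1) (τ : ℝ) :
    (geo T α c₂ c₃ τ 0)^2 + (geo T α c₂ c₃ τ 1)^2 + (geo T α c₂ c₃ τ 2)^2
      = (Real.exp (T*τ))^2 := by
  have hsc := Real.sin_sq_add_cos_sq (α*τ)
  simp only [geo]
  simp only [Matrix.cons_val_zero, Matrix.cons_val_one, Matrix.head_cons,
    Matrix.cons_val_two, Matrix.tail_cons]
  linear_combination (Real.exp (T*τ))^2 * (Real.sin (α*τ))^2 * hc + (Real.exp (T*τ))^2 * hsc

lemma geo'_sq (hc : c₂^2 + c₃^2 = 1) (τ : ℝ) :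
    (geo' T α c₂ c₃ τ 0)^2 + (geo' T α c₂ c₃ τ 1)^2 + (geo' T α c₂ c₃ τ 2)^2
      = (Real.exp (T*τ))^2 * (T^2 + α^2) := by
  have hsc := Real.sin_sq_add_cos_sq (α*τ)
  simp only [geo']
  simp only [Matrix.cons_val_zero, Matrix.cons_val_one, Matrix.head_cons,
    Matrix.cons_val_two, Matrix.tail_cons]
  linear_combination (Real.exp (T*τ))^2 * (T * Real.sin (α*τ) + α * Real.cos (α*τ))^2 * hc
    + (Real.exp (T*τ))^2 * (T^2 + α^2) * hsc

lemma geo_ne (hc : c₂^2 + c₃^2 = 1) (τ : ℝ) : geo T α c₂ c₃ τ ≠ 0 := by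
  intro h0
  have := geo_sq T α c₂ c₃ hc τ
  rw [h0] at this
  simp only [Pi.zero_apply] at this
  nlinarith [Real.exp_pos (T*τ)]

lemma geo_integrand (hc : c₂^2 + c₃^2 = 1) (τ : ℝ) :
    Real.sqrt ((geo' T α c₂ c₃ τ 0)^2 + (geo' T α c₂ c₃ τ 1)^2 + (geo' T α c₂ c₃ τ 2)^2) /
      Real.sqrt ((geo T α c₂ c₃ τ 0)^2 + (geo T α c₂ c₃ τ 1)^2 + (geo T α c₂ c₃ τ 2)^2)
    = Real.sqrt (T^2 + α^2) := by
  rw [geo_sq T α c₂ c₃ hc τ, geo'_sq T α c₂ c₃ hc τ]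
  rw [Real.sqrt_mul (sq_nonneg _), Real.sqrt_sq (Real.exp_pos _).le]
  rw [mul_div_assoc]
  field_simp
end UB
section FIN
open Set Real

lemma Fd_vec (v : Fin 3 → ℝ) :
    Fd ((EuclideanSpace.equiv (Fin 3) ℝ).symm v)
      = Real.sqrt ((arccos (v 0 / Real.sqrt ((v 0)^2+(v 1)^2+(v 2)^2)))^2
        + (Real.log (Real.sqrt ((v 0)^2+(v 1)^2+(v 2)^2)))^2) := by
  have hn : ‖(EuclideanSpace.equiv (Fin 3) ℝ).symm v‖
      = Real.sqrt ((v 0)^2+(v 1)^2+(v 2)^2) := norm_ΓE (fun _ => v) 0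
  rw [Fd, hn]
  rfl

set_option maxHeartbeats 2000000 in
theorem s2r_distance_formula' (d e f : ℝ) (h : d ^ 2 + e ^ 2 + f ^ 2 ≠ 0) :
    sInf {L : ℝ | ∃ γ γ' : ℝ → (Fin 3 → ℝ),
      (∀ τ, HasDerivAt γ (γ' τ) τ) ∧ Continuous γ' ∧
      (∀ τ ∈ Set.Icc (0:ℝ) 1, γ τ ≠ 0) ∧
      γ 0 = ![1, 0, 0] ∧ γ 1 = ![d, e, f] ∧
      L = ∫ τ in (0:ℝ)..1,
        Real.sqrt ((γ' τ 0) ^ 2 + (γ' τ 1) ^ 2 + (γ' τ 2) ^ 2) /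
          Real.sqrt ((γ τ 0) ^ 2 + (γ τ 1) ^ 2 + (γ τ 2) ^ 2)} =
    Real.sqrt ((Real.arccos (d / Real.sqrt (d ^ 2 + e ^ 2 + f ^ 2))) ^ 2 +
      (Real.log (Real.sqrt (d ^ 2 + e ^ 2 + f ^ 2))) ^ 2) := by
  have hsum : 0 < d^2 + e^2 + f^2 := lt_of_le_of_ne (by positivity) (Ne.symm h)
  set r := Real.sqrt (d^2+e^2+f^2) with hrdef
  have hrpos : 0 < r := Real.sqrt_pos.2 hsum
  have hr2 : r^2 = d^2+e^2+f^2 := Real.sq_sqrt hsum.le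
  set T := Real.log r with hTdef
  set α := Real.arccos (d/r) with hαdef
  set p := Real.sqrt (e^2+f^2) with hpdef
  have hp0 : 0 ≤ p := Real.sqrt_nonneg _
  have hp2 : p^2 = e^2+f^2 := Real.sq_sqrt (by positivity)
  set c₂ := if p = 0 then (1:ℝ) else e/p with hc₂def
  set c₃ := if p = 0 then (0:ℝ) else f/p with hc₃def
  have hc23 : c₂^2 + c₃^2 = 1 := by
    by_cases hp : p = 0
    · simp [hc₂def, hc₃def, hp]
    · rw [hc₂def, hc₃def, if_neg hp, if_neg hp]
      field_simp
      exact hp2.symm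
  have habs : |d| ≤ r := by
    rw [← Real.sqrt_sq_eq_abs, hrdef]
    apply Real.sqrt_le_sqrt; nlinarith
  have hdr1 : -1 ≤ d/r := by
    rw [le_div_iff₀ hrpos]; cases' abs_le.1 habs with h1 h2; linarith
  have hdr2 : d/r ≤ 1 := by
    rw [div_le_iff₀ hrpos]; cases' abs_le.1 habs with h1 h2; linarith
  have hcosα : Real.cos α = d/r := Real.cos_arccos hdr1 hdr2
  have hsinα : Real.sin α = p/r := by
    rw [hαdef, Real.sin_arccos]
    rw [show 1 - (d/r)^2 = (e^2+f^2)/r^2 by field_simp; rw [hr2]; ring]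
    rw [← hp2, Real.sqrt_div (by positivity), Real.sqrt_sq hrpos.le, Real.sqrt_sq hp0]
  have hexpT : Real.exp T = r := Real.exp_log hrpos
  -- the candidate geodesic
  set D := Real.sqrt (α^2 + T^2) with hDdef
  have hgeo0 : geo T α c₂ c₃ 0 = ![1, 0, 0] := by
    funext i
    fin_cases i <;> simp [geo]
  have hgeo1 : geo T α c₂ c₃ 1 = ![d, e, f] := by
    funext i
    fin_cases i
    · show Real.exp (T*1) * Real.cos (α*1) = d
      rw [mul_one, mul_one, hexpT, hcosα]
      field_simp
    · show Real.exp (T*1) * (Real.sin (α*1) * c₂) = e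
      rw [mul_one, mul_one, hexpT, hsinα]
      by_cases hp : p = 0
      · have he : e = 0 := by nlinarith [hp2, sq_nonneg e, sq_nonneg f, hp]
        rw [hp]; simp [he]
      · rw [hc₂def, if_neg hp]; field_simp
    · show Real.exp (T*1) * (Real.sin (α*1) * c₃) = f
      rw [mul_one, mul_one, hexpT, hsinα]
      by_cases hp : p = 0
      · have hf : f = 0 := by nlinarith [hp2, sq_nonneg e, sq_nonneg f, hp]
        rw [hp]; simp [hf]
      · rw [hc₃def, if_neg hp]; field_simp
  have hint : (∫ τ in (0:ℝ)..1,
      Real.sqrt ((geo' T α c₂ c₃ τ 0)^2 + (geo' T α c₂ c₃ τ 1)^2 + (geo' T α c₂ c₃ τ 2)^2) /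
        Real.sqrt ((geo T α c₂ c₃ τ 0)^2 + (geo T α c₂ c₃ τ 1)^2 + (geo T α c₂ c₃ τ 2)^2))
      = D := by
    rw [show (fun τ => Real.sqrt ((geo' T α c₂ c₃ τ 0)^2 + (geo' T α c₂ c₃ τ 1)^2
          + (geo' T α c₂ c₃ τ 2)^2) /
        Real.sqrt ((geo T α c₂ c₃ τ 0)^2 + (geo T α c₂ c₃ τ 1)^2 + (geo T α c₂ c₃ τ 2)^2))
        = fun _ => Real.sqrt (T^2 + α^2) from funext (geo_integrand T α c₂ c₃ hc23)]
    simp [hDdef, add_comm (T^2) (α^2)]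
  have hmem : D ∈ {L : ℝ | ∃ γ γ' : ℝ → (Fin 3 → ℝ),
      (∀ τ, HasDerivAt γ (γ' τ) τ) ∧ Continuous γ' ∧
      (∀ τ ∈ Set.Icc (0:ℝ) 1, γ τ ≠ 0) ∧
      γ 0 = ![1, 0, 0] ∧ γ 1 = ![d, e, f] ∧
      L = ∫ τ in (0:ℝ)..1,
        Real.sqrt ((γ' τ 0) ^ 2 + (γ' τ 1) ^ 2 + (γ' τ 2) ^ 2) /
          Real.sqrt ((γ τ 0) ^ 2 + (γ τ 1) ^ 2 + (γ τ 2) ^ 2)} := by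
    refine ⟨geo T α c₂ c₃, geo' T α c₂ c₃, hasDerivAt_geo T α c₂ c₃,
      continuous_geo' T α c₂ c₃, fun τ _ => geo_ne T α c₂ c₃ hc23 τ, hgeo0, hgeo1, hint.symm⟩
  -- lower bound for every element
  have hlow : ∀ L ∈ {L : ℝ | ∃ γ γ' : ℝ → (Fin 3 → ℝ),
      (∀ τ, HasDerivAt γ (γ' τ) τ) ∧ Continuous γ' ∧
      (∀ τ ∈ Set.Icc (0:ℝ) 1, γ τ ≠ 0) ∧
      γ 0 = ![1, 0, 0] ∧ γ 1 = ![d, e, f] ∧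
      L = ∫ τ in (0:ℝ)..1,
        Real.sqrt ((γ' τ 0) ^ 2 + (γ' τ 1) ^ 2 + (γ' τ 2) ^ 2) /
          Real.sqrt ((γ τ 0) ^ 2 + (γ τ 1) ^ 2 + (γ τ 2) ^ 2)}, D ≤ L := by
    rintro L ⟨γ, γ', hd, hc, hne, h0, h1, rfl⟩
    have hlb := lower_bound hd hc hne
    have hF0 : Fd (ΓE γ 0) = 0 := by
      have : ΓE γ 0 = (EuclideanSpace.equiv (Fin 3) ℝ).symm ![1,0,0] := by
        rw [ΓE, h0]
      rw [this, Fd_vec]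
      norm_num [Matrix.cons_val_two, Matrix.vecHead, Matrix.vecTail]
    have hF1 : Fd (ΓE γ 1) = D := by
      have : ΓE γ 1 = (EuclideanSpace.equiv (Fin 3) ℝ).symm ![d,e,f] := by
        rw [ΓE, h1]
      rw [this, Fd_vec]
      rw [hDdef, hαdef, hTdef, hrdef]
      norm_num [Matrix.cons_val_two, Matrix.vecHead, Matrix.vecTail]
    have hψeq : (fun τ => ‖ΓE γ' τ‖ / ‖ΓE γ τ‖)
        = fun τ => Real.sqrt ((γ' τ 0) ^ 2 + (γ' τ 1) ^ 2 + (γ' τ 2) ^ 2) /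
          Real.sqrt ((γ τ 0) ^ 2 + (γ τ 1) ^ 2 + (γ τ 2) ^ 2) := by
      funext τ
      rw [norm_ΓE, norm_ΓE]
    rw [hF0, hF1, zero_add, hψeq] at hlb
    exact hlb
  exact le_antisymm (csInf_le ⟨D, hlow⟩ hmem) (le_csInf ⟨D, hmem⟩ hlow)
end FIN

/-- In the model of S²×R on ℝ³ \ {0} with metric
(ds)² = ((dx)²+(dy)²+(dz)²)/(x²+y²+z²), the geodesic distance (infimum of
lengths of C¹ paths) from (1,0,0) to (d,e,f) with d²+e²+f² ≠ 0 equals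
√( arccos(d/√(d²+e²+f²))² + (log √(d²+e²+f²))² ). -/
theorem s2r_distance_formula (d e f : ℝ) (h : d ^ 2 + e ^ 2 + f ^ 2 ≠ 0) :
    sInf {L : ℝ | ∃ γ γ' : ℝ → (Fin 3 → ℝ),
      (∀ τ, HasDerivAt γ (γ' τ) τ) ∧ Continuous γ' ∧
      (∀ τ ∈ Set.Icc (0:ℝ) 1, γ τ ≠ 0) ∧
      γ 0 = ![1, 0, 0] ∧ γ 1 = ![d, e, f] ∧
      L = ∫ τ in (0:ℝ)..1,
        Real.sqrt ((γ' τ 0) ^ 2 + (γ' τ 1) ^ 2 + (γ' τ 2) ^ 2) /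
          Real.sqrt ((γ τ 0) ^ 2 + (γ τ 1) ^ 2 + (γ τ 2) ^ 2)} =
    Real.sqrt ((Real.arccos (d / Real.sqrt (d ^ 2 + e ^ 2 + f ^ 2))) ^ 2 +
      (Real.log (Real.sqrt (d ^ 2 + e ^ 2 + f ^ 2))) ^ 2) :=
  s2r_distance_formula' d e f h
end
end

section
/- In the model of H²×R, the distance from the base point P₁ = (1,0,0) to a point P₂ = (d,e,f) with d²−e²−f² > 0 and d > 0 equals √( arccosh(d/√(d²−e²−f²))² + (log √(d²−e²−f²))² ). -/
open Real

/-- Inverse hyperbolic cosine. -/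
noncomputable def arcosh (x : ℝ) : ℝ := Real.log (x + Real.sqrt (x ^ 2 - 1))

lemma arcosh_base_pos {x : ℝ} (hx : 1 ≤ x) : 0 < x + Real.sqrt (x ^ 2 - 1) := by
  have := Real.sqrt_nonneg (x ^ 2 - 1); linarith

lemma arcosh_nonneg {x : ℝ} (hx : 1 ≤ x) : 0 ≤ _root_.arcosh x := by
  unfold _root_.arcosh
  apply Real.log_nonneg
  have := Real.sqrt_nonneg (x ^ 2 - 1); linarith

lemma sq_sqrt_sub {x : ℝ} (hx : 1 ≤ x) : Real.sqrt (x ^ 2 - 1) ^ 2 = x ^ 2 - 1 := by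
  rw [sq_sqrt]; nlinarith

lemma cosh_arcosh {x : ℝ} (hx : 1 ≤ x) : Real.cosh (_root_.arcosh x) = x := by
  unfold _root_.arcosh
  rw [Real.cosh_log (arcosh_base_pos hx)]
  have hs := sq_sqrt_sub hx
  set s := Real.sqrt (x ^ 2 - 1) with hsdef
  have hpos : 0 < x + s := arcosh_base_pos hx
  field_simp
  nlinarith

lemma sinh_arcosh {x : ℝ} (hx : 1 ≤ x) : Real.sinh (_root_.arcosh x) = Real.sqrt (x ^ 2 - 1) := by
  unfold _root_.arcosh
  rw [Real.sinh_log (arcosh_base_pos hx)]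
  have hs := sq_sqrt_sub hx
  set s := Real.sqrt (x ^ 2 - 1) with hsdef
  have hpos : 0 < x + s := arcosh_base_pos hx
  field_simp
  nlinarith

lemma cauchy2 (a b x y : ℝ) :
    a * x + b * y ≤ Real.sqrt (a ^ 2 + b ^ 2) * Real.sqrt (x ^ 2 + y ^ 2) := by
  rw [← Real.sqrt_mul (by positivity)]
  calc a * x + b * y ≤ Real.sqrt ((a * x + b * y) ^ 2) := by
        rw [Real.sqrt_sq_eq_abs]; exact le_abs_self _
    _ ≤ Real.sqrt ((a ^ 2 + b ^ 2) * (x ^ 2 + y ^ 2)) := by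
        apply Real.sqrt_le_sqrt; nlinarith [sq_nonneg (a * y - b * x)]

set_option maxHeartbeats 1000000 in
/-- In the model of H²×R (cylindrical coordinates (t,r,α),
x = eᵗ cosh r, y = eᵗ sinh r cos α, z = eᵗ sinh r sin α, with metric
(ds)² = (dt)² + (dr)² + sinh²r (dα)²), the geodesic distance (infimum of
lengths of C¹ coordinate paths) from (1,0,0) to (d,e,f) with
d² − e² − f² > 0, d > 0 equals √( arccosh(d/√(d²−e²−f²))² + (log √(d²−e²−f²))² ). -/
theorem h2r_distance_formula (d e f : ℝ) (h : 0 < d ^ 2 - e ^ 2 - f ^ 2) (hd : 0 < d) :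
    sInf {L : ℝ | ∃ c c' : ℝ → (Fin 3 → ℝ),
      (∀ τ, HasDerivAt c (c' τ) τ) ∧ Continuous c' ∧
      -- the endpoint at τ = 0 is the base point (1,0,0): t = 0, r = 0
      c 0 0 = 0 ∧ c 0 1 = 0 ∧
      -- the endpoint at τ = 1 has Cartesian coordinates (d,e,f)
      Real.exp (c 1 0) * Real.cosh (c 1 1) = d ∧
      Real.exp (c 1 0) * Real.sinh (c 1 1) * Real.cos (c 1 2) = e ∧
      Real.exp (c 1 0) * Real.sinh (c 1 1) * Real.sin (c 1 2) = f ∧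
      L = ∫ τ in (0:ℝ)..1,
        Real.sqrt ((c' τ 0) ^ 2 + (c' τ 1) ^ 2 +
          (Real.sinh (c τ 1)) ^ 2 * (c' τ 2) ^ 2)} =
    Real.sqrt ((_root_.arcosh (d / Real.sqrt (d ^ 2 - e ^ 2 - f ^ 2))) ^ 2 +
      (Real.log (Real.sqrt (d ^ 2 - e ^ 2 - f ^ 2))) ^ 2) := by
  set ρ : ℝ := Real.sqrt (d ^ 2 - e ^ 2 - f ^ 2) with hρdef
  have hρ : 0 < ρ := Real.sqrt_pos.2 h
  have hρsq : ρ ^ 2 = d ^ 2 - e ^ 2 - f ^ 2 := Real.sq_sqrt h.le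
  have hdρ : ρ ≤ d := by
    nlinarith [sq_nonneg (d - ρ), sq_nonneg e, sq_nonneg f]
  have hd1 : 1 ≤ d / ρ := (le_div_iff₀ hρ).2 (by linarith)
  set T : ℝ := Real.log ρ with hTdef
  set R : ℝ := _root_.arcosh (d / ρ) with hRdef
  set D : ℝ := Real.sqrt (R ^ 2 + T ^ 2) with hDdef
  have hR0 : 0 ≤ R := _root_.arcosh_nonneg hd1
  have hcoshR : Real.cosh R = d / ρ := _root_.cosh_arcosh hd1
  have hsinhR : Real.sinh R = Real.sqrt (e ^ 2 + f ^ 2) / ρ := by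
    rw [hRdef, _root_.sinh_arcosh hd1]
    have : (d / ρ) ^ 2 - 1 = (e ^ 2 + f ^ 2) / ρ ^ 2 := by
      field_simp; nlinarith
    rw [this, Real.sqrt_div (by positivity), Real.sqrt_sq hρ.le]
  -- the set
  set S : Set ℝ := {L : ℝ | ∃ c c' : ℝ → (Fin 3 → ℝ),
      (∀ τ, HasDerivAt c (c' τ) τ) ∧ Continuous c' ∧
      c 0 0 = 0 ∧ c 0 1 = 0 ∧
      Real.exp (c 1 0) * Real.cosh (c 1 1) = d ∧
      Real.exp (c 1 0) * Real.sinh (c 1 1) * Real.cos (c 1 2) = e ∧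
      Real.exp (c 1 0) * Real.sinh (c 1 1) * Real.sin (c 1 2) = f ∧
      L = ∫ τ in (0:ℝ)..1,
        Real.sqrt ((c' τ 0) ^ 2 + (c' τ 1) ^ 2 +
          (Real.sinh (c τ 1)) ^ 2 * (c' τ 2) ^ 2)} with hSdef
  -- Membership: the straight geodesic
  have hmem : D ∈ S := by
    set z : ℂ := ⟨e, f⟩ with hzdef
    have hzabs : ‖z‖ = Real.sqrt (e ^ 2 + f ^ 2) := by
      rw [Complex.norm_def, Complex.normSq_mk]; ring_nf
    refine ⟨fun τ => ![τ * T, τ * R, z.arg], fun τ => ![T, R, 0], ?_, ?_, ?_, ?_, ?_, ?_, ?_, ?_⟩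
    · intro τ
      rw [hasDerivAt_pi]
      intro i
      fin_cases i <;> simp only [Matrix.cons_val_zero, Matrix.cons_val_one, Matrix.head_cons,
        Matrix.cons_val_two, Matrix.tail_cons]
      · exact hasDerivAt_mul_const T
      · exact hasDerivAt_mul_const R
      · exact hasDerivAt_const τ _
    · exact continuous_const
    · simp
    · simp
    · simp only [Matrix.cons_val_zero, Matrix.cons_val_one, Matrix.head_cons, one_mul]
      rw [hTdef, Real.exp_log hρ, hcoshR]
      field_simp
    · simp only [Matrix.cons_val_zero, Matrix.cons_val_one, Matrix.head_cons,
        Matrix.cons_val_two, Matrix.tail_cons, one_mul]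
      rw [hTdef, Real.exp_log hρ, hsinhR]
      by_cases hz : z = 0
      · have he : e = 0 := congrArg Complex.re hz
        have hf : f = 0 := congrArg Complex.im hz
        simp [he, hf]
      · rw [Complex.cos_arg hz, hzabs]
        have hzre : z.re = e := rfl
        have habs : 0 < Real.sqrt (e ^ 2 + f ^ 2) := by
          rw [← hzabs]; exact norm_pos_iff.2 hz
        rw [hzre]
        field_simp
    · simp only [Matrix.cons_val_zero, Matrix.cons_val_one, Matrix.head_cons,
        Matrix.cons_val_two, Matrix.tail_cons, one_mul]
      rw [hTdef, Real.exp_log hρ, hsinhR]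
      by_cases hz : z = 0
      · have he : e = 0 := congrArg Complex.re hz
        have hf : f = 0 := congrArg Complex.im hz
        simp [he, hf]
      · rw [Complex.sin_arg, hzabs]
        have hzim : z.im = f := rfl
        have habs : 0 < Real.sqrt (e ^ 2 + f ^ 2) := by
          rw [← hzabs]; exact norm_pos_iff.2 hz
        rw [hzim]
        field_simp
    · simp only [Matrix.cons_val_zero, Matrix.cons_val_one, Matrix.head_cons,
        Matrix.cons_val_two, Matrix.tail_cons]
      have : ∀ τ : ℝ, Real.sqrt (T ^ 2 + R ^ 2 + Real.sinh (τ * R) ^ 2 * 0 ^ 2) = D := by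
        intro τ
        rw [hDdef]
        congr 1
        ring
      simp only [this]
      rw [intervalIntegral.integral_const]
      simp
  -- Lower bound
  have hlb : ∀ L ∈ S, D ≤ L := by
    rintro L ⟨c, c', hc, hc', h00, h01, hE1, hE2, hE3, hLdef⟩
    have hci : ∀ (i : Fin 3) τ, HasDerivAt (fun τ => c τ i) (c' τ i) τ :=
      fun i τ => hasDerivAt_pi.1 (hc τ) i
    have hcont : ∀ i : Fin 3, Continuous fun τ => c τ i := fun i =>
      continuous_iff_continuousAt.2 fun τ => (hci i τ).continuousAt
    have hc'i : ∀ i : Fin 3, Continuous fun τ => c' τ i := fun i =>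
      (continuous_apply i).comp hc'
    have hcontI : Continuous fun τ => Real.sqrt ((c' τ 0) ^ 2 + (c' τ 1) ^ 2 +
        (Real.sinh (c τ 1)) ^ 2 * (c' τ 2) ^ 2) :=
      Real.continuous_sqrt.comp ((((hc'i 0).pow 2).add ((hc'i 1).pow 2)).add
        (((Real.continuous_sinh.comp (hcont 1)).pow 2).mul ((hc'i 2).pow 2)))
    have hL0 : 0 ≤ L := by
      rw [hLdef]
      apply intervalIntegral.integral_nonneg (by norm_num)
      intro τ _; positivity
    -- endpoint identities
    have hEsq : Real.exp (c 1 0) ^ 2 = d ^ 2 - e ^ 2 - f ^ 2 := by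
      have h1 : d ^ 2 = Real.exp (c 1 0) ^ 2 * Real.cosh (c 1 1) ^ 2 := by
        rw [← hE1]; ring
      have h2 : e ^ 2 + f ^ 2 = Real.exp (c 1 0) ^ 2 * Real.sinh (c 1 1) ^ 2 := by
        rw [← hE2, ← hE3]
        have hsc := Real.sin_sq_add_cos_sq (c 1 2)
        nlinarith
      have h3 : Real.exp (c 1 0) ^ 2 * (Real.cosh (c 1 1) ^ 2 - Real.sinh (c 1 1) ^ 2)
          = Real.exp (c 1 0) ^ 2 := by rw [Real.cosh_sq_sub_sinh_sq]; ring
      linear_combination -h1 + h2 - h3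
    have hEρ : Real.exp (c 1 0) = ρ := by
      have h1 : Real.sqrt (Real.exp (c 1 0) ^ 2) = Real.sqrt (ρ ^ 2) := by
        rw [hEsq, hρsq]
      rwa [Real.sqrt_sq (Real.exp_pos _).le, Real.sqrt_sq hρ.le] at h1
    have hT1 : c 1 0 = T := by
      rw [hTdef, ← hEρ, Real.log_exp]
    have hcosh1 : Real.cosh (c 1 1) = d / ρ := by
      rw [hEρ] at hE1
      field_simp [← hE1]
      linear_combination hE1
    have habs : |c 1 1| = R := by
      apply Real.sinh_injective
      have hs1 : Real.sinh |c 1 1| = Real.sqrt ((d / ρ) ^ 2 - 1) := by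
        have hsq : Real.sinh |c 1 1| ^ 2 = (d / ρ) ^ 2 - 1 := by
          have hcs := Real.cosh_sq (|c 1 1|)
          rw [Real.cosh_abs, hcosh1] at hcs
          linarith
        rw [← hsq, Real.sqrt_sq (Real.sinh_nonneg_iff.2 (abs_nonneg _))]
      rw [hs1, hRdef, _root_.sinh_arcosh hd1]
    have hr1sq : (c 1 1) ^ 2 = R ^ 2 := by rw [← sq_abs, habs]
    by_cases hD : D = 0
    · rw [hD]; exact hL0
    have hDpos : 0 < D := lt_of_le_of_ne (Real.sqrt_nonneg _) (Ne.symm hD)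
    -- FTC
    have hint0 : (∫ τ in (0:ℝ)..1, c' τ 0) = T := by
      rw [intervalIntegral.integral_eq_sub_of_hasDerivAt (fun τ _ => hci 0 τ)
        ((hc'i 0).intervalIntegrable 0 1), h00, hT1, sub_zero]
    have hint1 : (∫ τ in (0:ℝ)..1, c' τ 1) = c 1 1 := by
      rw [intervalIntegral.integral_eq_sub_of_hasDerivAt (fun τ _ => hci 1 τ)
        ((hc'i 1).intervalIntegrable 0 1), h01, sub_zero]
    -- pointwise Cauchy-Schwarz bound
    have key : ∀ τ : ℝ, T * c' τ 0 + (c 1 1) * c' τ 1 ≤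
        D * Real.sqrt ((c' τ 0) ^ 2 + (c' τ 1) ^ 2 +
          (Real.sinh (c τ 1)) ^ 2 * (c' τ 2) ^ 2) := by
      intro τ
      have h1 := cauchy2 T (c 1 1) (c' τ 0) (c' τ 1)
      have h2 : Real.sqrt (T ^ 2 + (c 1 1) ^ 2) = D := by
        rw [hr1sq, hDdef, add_comm]
      rw [h2] at h1
      refine h1.trans (mul_le_mul_of_nonneg_left ?_ hDpos.le)
      apply Real.sqrt_le_sqrt
      nlinarith [sq_nonneg (Real.sinh (c τ 1) * c' τ 2)]
    have hmono : (∫ τ in (0:ℝ)..1, (T * c' τ 0 + (c 1 1) * c' τ 1)) ≤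
        ∫ τ in (0:ℝ)..1, D * Real.sqrt ((c' τ 0) ^ 2 + (c' τ 1) ^ 2 +
          (Real.sinh (c τ 1)) ^ 2 * (c' τ 2) ^ 2) := by
      apply intervalIntegral.integral_mono_on (by norm_num)
      · exact ((continuous_const.mul (hc'i 0)).add (continuous_const.mul (hc'i 1))).intervalIntegrable 0 1
      · exact (continuous_const.mul hcontI).intervalIntegrable 0 1
      · intro τ _; exact key τ
    rw [intervalIntegral.integral_add (f := fun τ => T * c' τ 0) (g := fun τ => c 1 1 * c' τ 1) ((continuous_const.mul (hc'i 0)).intervalIntegrable 0 1)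
        ((continuous_const.mul (hc'i 1)).intervalIntegrable 0 1),
      intervalIntegral.integral_const_mul, intervalIntegral.integral_const_mul,
      hint0, hint1, intervalIntegral.integral_const_mul, ← hLdef] at hmono
    have hDsq : D ^ 2 = R ^ 2 + T ^ 2 := Real.sq_sqrt (by positivity)
    have : D * D ≤ D * L := by nlinarith [hmono, hr1sq]
    exact le_of_mul_le_mul_left this hDpos
  exact le_antisymm (csInf_le ⟨D, fun L hL => hlb L hL⟩ hmem)
    (le_csInf ⟨D, hmem⟩ hlb)
end

section
/- The parametrized curve γ(τ) = (e^{τ sin v} cos(τ cos v), e^{τ sin v} sin(τ cos v) cos u, e^{τ sin v} sin(τ cos v) sin u) is a unit-speed geodesic in S²×R: its speed with respect to the metric (ds)² = ((dx)²+(dy)²+(dz)²)/(x²+y²+z²) is identically 1, and it satisfies the geodesic equations of this metric. -/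
open Real

lemma hdA (s c τ : ℝ) :
    HasDerivAt (fun t : ℝ => Real.exp (t * s) * Real.cos (t * c))
      (Real.exp (τ * s) * (s * Real.cos (τ * c) - c * Real.sin (τ * c))) τ := by
  have h1 : HasDerivAt (fun t : ℝ => t * s) s τ := by
    simpa using (hasDerivAt_id τ).mul_const s
  have h2 : HasDerivAt (fun t : ℝ => t * c) c τ := by
    simpa using (hasDerivAt_id τ).mul_const c
  have := (h1.exp).mul (h2.cos)
  exact this.congr_deriv (by ring)

lemma hdB (s c τ : ℝ) :
    HasDerivAt (fun t : ℝ => Real.exp (t * s) * Real.sin (t * c))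
      (Real.exp (τ * s) * (s * Real.sin (τ * c) + c * Real.cos (τ * c))) τ := by
  have h1 : HasDerivAt (fun t : ℝ => t * s) s τ := by
    simpa using (hasDerivAt_id τ).mul_const s
  have h2 : HasDerivAt (fun t : ℝ => t * c) c τ := by
    simpa using (hasDerivAt_id τ).mul_const c
  have := (h1.exp).mul (h2.sin)
  exact this.congr_deriv (by ring)


/-- γ(τ) = (e^{τ sin v} cos(τ cos v), e^{τ sin v} sin(τ cos v) cos u,
e^{τ sin v} sin(τ cos v) sin u) is a unit-speed geodesic in S²×R, i.e. for the
conformal metric g = (dx²+dy²+dz²)/(x²+y²+z²): its speed is identically 1 and its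
components satisfy the geodesic equations
X'' − 2((X X' + Y Y' + Z Z')/ρ²) X' + ((X'²+Y'²+Z'²)/ρ²) X = 0 (and cyclically),
where ρ² = X²+Y²+Z². -/
theorem s2r_geodesic_unit_speed_and_equations (u v : ℝ)
    (hu : u ∈ Set.Ioc (-π) π) (hv : v ∈ Set.Icc (-(π / 2)) (π / 2))
    (X Y Z : ℝ → ℝ)
    (hX : X = fun τ => Real.exp (τ * Real.sin v) * Real.cos (τ * Real.cos v))
    (hY : Y = fun τ => Real.exp (τ * Real.sin v) * Real.sin (τ * Real.cos v) * Real.cos u)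
    (hZ : Z = fun τ => Real.exp (τ * Real.sin v) * Real.sin (τ * Real.cos v) * Real.sin u) :
    ∀ τ : ℝ,
      -- unit speed: ‖γ'‖²/‖γ‖² = 1
      ((deriv X τ) ^ 2 + (deriv Y τ) ^ 2 + (deriv Z τ) ^ 2) /
        ((X τ) ^ 2 + (Y τ) ^ 2 + (Z τ) ^ 2) = 1 ∧
      -- geodesic equations of the conformal metric δ/‖x‖²
      (deriv (deriv X) τ
        - 2 * ((X τ * deriv X τ + Y τ * deriv Y τ + Z τ * deriv Z τ) /
            ((X τ) ^ 2 + (Y τ) ^ 2 + (Z τ) ^ 2)) * deriv X τ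
        + (((deriv X τ) ^ 2 + (deriv Y τ) ^ 2 + (deriv Z τ) ^ 2) /
            ((X τ) ^ 2 + (Y τ) ^ 2 + (Z τ) ^ 2)) * X τ = 0) ∧
      (deriv (deriv Y) τ
        - 2 * ((X τ * deriv X τ + Y τ * deriv Y τ + Z τ * deriv Z τ) /
            ((X τ) ^ 2 + (Y τ) ^ 2 + (Z τ) ^ 2)) * deriv Y τ
        + (((deriv X τ) ^ 2 + (deriv Y τ) ^ 2 + (deriv Z τ) ^ 2) /
            ((X τ) ^ 2 + (Y τ) ^ 2 + (Z τ) ^ 2)) * Y τ = 0) ∧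
      (deriv (deriv Z) τ
        - 2 * ((X τ * deriv X τ + Y τ * deriv Y τ + Z τ * deriv Z τ) /
            ((X τ) ^ 2 + (Y τ) ^ 2 + (Z τ) ^ 2)) * deriv Z τ
        + (((deriv X τ) ^ 2 + (deriv Y τ) ^ 2 + (deriv Z τ) ^ 2) /
            ((X τ) ^ 2 + (Y τ) ^ 2 + (Z τ) ^ 2)) * Z τ = 0) := by
  set s := Real.sin v with hs
  set c := Real.cos v with hc
  have hX' : deriv X = fun τ => Real.exp (τ * s) * (s * Real.cos (τ * c) - c * Real.sin (τ * c)) := by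
    funext τ; rw [hX]; exact (hdA s c τ).deriv
  have hY' : deriv Y = fun τ =>
      Real.exp (τ * s) * (s * Real.sin (τ * c) + c * Real.cos (τ * c)) * Real.cos u := by
    funext τ; rw [hY]
    exact ((hdB s c τ).mul_const (Real.cos u)).deriv
  have hZ' : deriv Z = fun τ =>
      Real.exp (τ * s) * (s * Real.sin (τ * c) + c * Real.cos (τ * c)) * Real.sin u := by
    funext τ; rw [hZ]
    exact ((hdB s c τ).mul_const (Real.sin u)).deriv
  have hfx : (fun t : ℝ => Real.exp (t * s) * (s * Real.cos (t * c) - c * Real.sin (t * c)))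
      = fun t : ℝ => s * (Real.exp (t * s) * Real.cos (t * c))
          - c * (Real.exp (t * s) * Real.sin (t * c)) := by
    funext t; ring
  have hfy : (fun t : ℝ => Real.exp (t * s) * (s * Real.sin (t * c) + c * Real.cos (t * c)) * Real.cos u)
      = fun t : ℝ => Real.cos u * (s * (Real.exp (t * s) * Real.sin (t * c))
          + c * (Real.exp (t * s) * Real.cos (t * c))) := by
    funext t; ring
  have hfz : (fun t : ℝ => Real.exp (t * s) * (s * Real.sin (t * c) + c * Real.cos (t * c)) * Real.sin u)
      = fun t : ℝ => Real.sin u * (s * (Real.exp (t * s) * Real.sin (t * c))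
          + c * (Real.exp (t * s) * Real.cos (t * c))) := by
    funext t; ring
  have hX'' : ∀ τ : ℝ, deriv (deriv X) τ =
      s * (Real.exp (τ * s) * (s * Real.cos (τ * c) - c * Real.sin (τ * c)))
        - c * (Real.exp (τ * s) * (s * Real.sin (τ * c) + c * Real.cos (τ * c))) := by
    intro τ; rw [hX', hfx]
    exact (((hdA s c τ).const_mul s).sub ((hdB s c τ).const_mul c)).deriv
  have hY'' : ∀ τ : ℝ, deriv (deriv Y) τ =
      Real.cos u * (s * (Real.exp (τ * s) * (s * Real.sin (τ * c) + c * Real.cos (τ * c)))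
        + c * (Real.exp (τ * s) * (s * Real.cos (τ * c) - c * Real.sin (τ * c)))) := by
    intro τ; rw [hY', hfy]
    exact ((((hdB s c τ).const_mul s).add ((hdA s c τ).const_mul c)).const_mul (Real.cos u)).deriv
  have hZ'' : ∀ τ : ℝ, deriv (deriv Z) τ =
      Real.sin u * (s * (Real.exp (τ * s) * (s * Real.sin (τ * c) + c * Real.cos (τ * c)))
        + c * (Real.exp (τ * s) * (s * Real.cos (τ * c) - c * Real.sin (τ * c)))) := by
    intro τ; rw [hZ', hfz]
    exact ((((hdB s c τ).const_mul s).add ((hdA s c τ).const_mul c)).const_mul (Real.sin u)).deriv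
  intro τ
  have hvtrig : s ^ 2 + c ^ 2 = 1 := by rw [hs, hc]; exact sin_sq_add_cos_sq v
  have hutrig : Real.sin u ^ 2 + Real.cos u ^ 2 = 1 := sin_sq_add_cos_sq u
  have httrig : Real.sin (τ * c) ^ 2 + Real.cos (τ * c) ^ 2 = 1 := sin_sq_add_cos_sq (τ * c)
  have hE : Real.exp (τ * s) ≠ 0 := (Real.exp_pos _).ne'
  set E := Real.exp (τ * s)
  set cs := Real.cos (τ * c)
  set sn := Real.sin (τ * c)
  set cu := Real.cos u
  set su := Real.sin u
  have hρ : X τ ^ 2 + Y τ ^ 2 + Z τ ^ 2 = E ^ 2 := by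
    rw [hX, hY, hZ]
    simp only []
    linear_combination (E ^ 2 * sn ^ 2) * hutrig + E ^ 2 * httrig
  have hsp : deriv X τ ^ 2 + deriv Y τ ^ 2 + deriv Z τ ^ 2 = E ^ 2 := by
    rw [hX', hY', hZ']
    simp only []
    linear_combination (E ^ 2 * (s * sn + c * cs) ^ 2) * hutrig
      + (E ^ 2 * (s ^ 2 + c ^ 2)) * httrig + E ^ 2 * hvtrig
  have hdot : X τ * deriv X τ + Y τ * deriv Y τ + Z τ * deriv Z τ = E ^ 2 * s := by
    rw [hX', hY', hZ', hX, hY, hZ]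
    simp only []
    linear_combination (E ^ 2 * sn * (s * sn + c * cs)) * hutrig + (E ^ 2 * s) * httrig
  have hE2 : E ^ 2 ≠ 0 := pow_ne_zero _ hE
  refine ⟨by rw [hρ, hsp]; field_simp, ?_, ?_, ?_⟩
  · rw [hρ, hsp, hdot, hX'' τ, hX', hX]
    simp only []
    field_simp
    linear_combination (-(Real.exp (s * τ) * Real.cos (τ * c))) * hvtrig
  · rw [hρ, hsp, hdot, hY'' τ, hY', hY]
    simp only []
    field_simp
    linear_combination (-(Real.exp (s * τ) * Real.sin (τ * c) * cu)) * hvtrig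
  · rw [hρ, hsp, hdot, hZ'' τ, hZ', hZ]
    simp only []
    field_simp
    linear_combination (-(Real.exp (s * τ) * Real.sin (τ * c) * su)) * hvtrig
end
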